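/- Let N ≥ 1 and let e, G : Fin N → ℝ be vectors with G i > 0 for every i. Let 0 < γ₂ ≤ γ₁ and let h : ℝ → ℝ satisfy the slope bounds −γ₁ ≤ (h x − h y)/(x − y) ≤ −γ₂ for all x ≠ y. Let a, â ∈ ℝ with e (last index) = a − â, and suppose either e i ≤ 0 for all i or e i ≥ 0 for all i. Then (∑ i, e i * G i) * (h a − h â) ≤ (∑ i, e i * G i) * γ₂ * (a − â). -/
import Mathlib

/-- Anode counterpart of the paper's Lemma 1: for a gain vector `G` with all
positive entries, an error vector `e` whose components have a uniform sign, and a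
strictly monotonically decreasing nonlinearity `h` with difference quotients
between `-γ₁` and `-γ₂`, one has `(eᵀG) * (h a - h ahat) ≤ (eᵀG) * γ₂ * (a - ahat)`. -/
theorem stmt_1 (N : ℕ) (hN : 1 ≤ N) (e G : Fin N → ℝ)
    (hG : ∀ i, 0 < G i)
    (γ₁ γ₂ : ℝ) (hγ₂ : 0 < γ₂) (hγ : γ₂ ≤ γ₁)
    (h : ℝ → ℝ)
    (hslope : ∀ x y : ℝ, x ≠ y →
      -γ₁ ≤ (h x - h y) / (x - y) ∧ (h x - h y) / (x - y) ≤ -γ₂)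
    (a ahat : ℝ)
    (hlast : e ⟨N - 1, Nat.sub_lt (by omega) one_pos⟩ = a - ahat)
    (hsign : (∀ i, e i ≤ 0) ∨ (∀ i, 0 ≤ e i)) :
    (∑ i, e i * G i) * (h a - h ahat) ≤ (∑ i, e i * G i) * γ₂ * (a - ahat) := by
  set S := ∑ i, e i * G i with hS
  have hSd : 0 ≤ S * (a - ahat) := by
    rcases hsign with hs | hs
    · have hS0 : S ≤ 0 :=
        Finset.sum_nonpos fun i _ => mul_nonpos_of_nonpos_of_nonneg (hs i) (hG i).le
      have hd : a - ahat ≤ 0 := hlast ▸ hs _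
      nlinarith
    · have hS0 : 0 ≤ S :=
        Finset.sum_nonneg fun i _ => mul_nonneg (hs i) (hG i).le
      have hd : 0 ≤ a - ahat := hlast ▸ hs _
      exact mul_nonneg hS0 hd
  have hLHS : S * (h a - h ahat) ≤ 0 := by
    by_cases hae : a = ahat
    · simp [hae]
    · have hq := (hslope a ahat hae).2
      have hda : a - ahat ≠ 0 := sub_ne_zero.mpr hae
      have hval : h a - h ahat = ((h a - h ahat) / (a - ahat)) * (a - ahat) := by
        field_simp
      rw [hval, show S * (((h a - h ahat) / (a - ahat)) * (a - ahat))
          = ((h a - h ahat) / (a - ahat)) * (S * (a - ahat)) by ring]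
      exact mul_nonpos_of_nonpos_of_nonneg (hq.trans (by linarith)) hSd
  calc S * (h a - h ahat) ≤ 0 := hLHS
    _ ≤ S * γ₂ * (a - ahat) := by
        rw [show S * γ₂ * (a - ahat) = γ₂ * (S * (a - ahat)) by ring]
        exact mul_nonneg hγ₂.le hSd
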